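/- Let Γ be a strongly regular graph on n vertices with μ > 0 and k > μ, and let f be a proper endomorphism of Γ of rank r. Then n − r ≥ 1 + √(n−1)/12. -/

import Mathlib

open Finset

theorem stmt17 {V : Type*} [Fintype V] [DecidableEq V] (Γ : SimpleGraph V)
    [DecidableRel Γ.Adj] (n k ℓ μ : ℕ)
    (h : Γ.IsSRGWith n k ℓ μ) (hμ : 0 < μ) (hk : μ < k)
    (f : Γ →g Γ) (hf : ¬ Function.Bijective f) (r : ℕ)
    (hr : (Finset.univ.image (f : V → V)).card = r) :
    1 + Real.sqrt ((n : ℝ) - 1) / 12 ≤ (n : ℝ) - r := by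
  classical
  -- basic counting lemmas
  have hcomm : ∀ a b : V, (Γ.neighborFinset a ∩ Γ.neighborFinset b).card
      = Fintype.card (Γ.commonNeighbors a b) := by
    intro a b
    rw [← Set.toFinset_card]
    congr 1
    ext x
    simp [SimpleGraph.mem_commonNeighbors]
  have hcomμ : ∀ a b : V, a ≠ b → ¬Γ.Adj a b →
      (Γ.neighborFinset a ∩ Γ.neighborFinset b).card = μ := by
    intro a b hab hnab
    rw [hcomm]; exact h.of_not_adj hab hnab
  have hcomℓ : ∀ a b : V, Γ.Adj a b →
      (Γ.neighborFinset a ∩ Γ.neighborFinset b).card = ℓ := by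
    intro a b hab
    rw [hcomm]; exact h.of_adj a b hab
  have hdeg : ∀ x : V, (Γ.neighborFinset x).card = k := by
    intro x
    rw [Γ.card_neighborFinset_eq_degree]
    exact h.regular x
  -- a collision of f
  have hninj : ¬ Function.Injective (f : V → V) := by
    intro hinj
    exact hf ⟨hinj, Finite.surjective_of_injective hinj⟩
  obtain ⟨u, v, hfuv, hne⟩ := Function.not_injective_iff.mp hninj
  have hnadj : ¬ Γ.Adj u v := by
    intro hadj
    have := f.map_adj hadj
    rw [hfuv] at this
    exact Γ.loopless.irrefl _ this
  -- the non-neighborhood of u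
  set M : Finset V := univ \ insert u (Γ.neighborFinset u) with hMdef
  have hMmem : ∀ w : V, w ∈ M ↔ (w ≠ u ∧ ¬ Γ.Adj u w) := by
    intro w
    rw [hMdef]
    simp [not_or]
  have hvM : v ∈ M := (hMmem v).2 ⟨Ne.symm hne, hnadj⟩
  have hm1 : 1 ≤ M.card := card_pos.mpr ⟨v, hvM⟩
  have huNu : u ∉ Γ.neighborFinset u := by simp
  have hinterM : ∀ A : Finset V, A ∩ M = A \ insert u (Γ.neighborFinset u) := by
    intro A
    rw [hMdef]
    ext x
    simp only [mem_inter, mem_sdiff, mem_univ, true_and]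
  have hnkm : n = 1 + k + M.card := by
    have h1 := card_sdiff_add_card_eq_card (subset_univ (insert u (Γ.neighborFinset u)))
    have h2 : (insert u (Γ.neighborFinset u)).card = k + 1 := by
      rw [card_insert_of_notMem huNu, hdeg u]
    rw [card_univ, h.card, h2, ← hMdef] at h1
    omega
  -- each w ∈ M has μ neighbors in N(u)
  have hwμ : ∀ w ∈ M, (Γ.neighborFinset w ∩ Γ.neighborFinset u).card = μ := by
    intro w hw
    obtain ⟨hwu, hwna⟩ := (hMmem w).1 hw
    exact hcomμ w u hwu (fun ha => hwna ha.symm)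
  -- each w ∈ M has k - μ neighbors in M
  have hMsplit : ∀ w ∈ M, μ + (Γ.neighborFinset w ∩ M).card = k := by
    intro w hw
    obtain ⟨hwu, hwna⟩ := (hMmem w).1 hw
    have h2 : Γ.neighborFinset w ∩ insert u (Γ.neighborFinset u)
        = Γ.neighborFinset w ∩ Γ.neighborFinset u := by
      ext x
      simp only [mem_inter, mem_insert, SimpleGraph.mem_neighborFinset]
      constructor
      · rintro ⟨hwx, hx | hx⟩
        · exact absurd (hx ▸ hwx) (fun ha => hwna ha.symm)
        · exact ⟨hwx, hx⟩
      · rintro ⟨hwx, hx⟩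
        exact ⟨hwx, Or.inr hx⟩
    have h3 := Finset.card_inter_add_card_sdiff (Γ.neighborFinset w)
      (insert u (Γ.neighborFinset u))
    rw [h2, hwμ w hw, hdeg w] at h3
    rw [hinterM (Γ.neighborFinset w)]
    exact h3
  -- each x ∈ N(u) has k - ℓ - 1 neighbors in M
  have hNusplit : ∀ x ∈ Γ.neighborFinset u, (1 + ℓ) + (Γ.neighborFinset x ∩ M).card = k := by
    intro x hx
    have hux : Γ.Adj u x := by simpa using hx
    have h2 : Γ.neighborFinset x ∩ insert u (Γ.neighborFinset u)
        = insert u (Γ.neighborFinset x ∩ Γ.neighborFinset u) := by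
      ext y
      simp only [mem_inter, mem_insert, SimpleGraph.mem_neighborFinset]
      constructor
      · rintro ⟨hxy, hy | hy⟩
        · exact Or.inl hy
        · exact Or.inr ⟨hxy, hy⟩
      · rintro (rfl | ⟨hxy, hy⟩)
        · exact ⟨hux.symm, Or.inl rfl⟩
        · exact ⟨hxy, Or.inr hy⟩
    have h4 : u ∉ Γ.neighborFinset x ∩ Γ.neighborFinset u := by
      simp only [mem_inter, SimpleGraph.mem_neighborFinset]
      rintro ⟨-, hadj⟩
      exact Γ.loopless.irrefl u hadj
    have h3 := Finset.card_inter_add_card_sdiff (Γ.neighborFinset x)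
      (insert u (Γ.neighborFinset u))
    rw [h2, card_insert_of_notMem h4, hcomℓ x u hux.symm, hdeg x] at h3
    rw [hinterM (Γ.neighborFinset x)]
    omega
  -- double counting
  have hdouble : ∑ x ∈ Γ.neighborFinset u, (Γ.neighborFinset x ∩ M).card
      = ∑ w ∈ M, (Γ.neighborFinset w ∩ Γ.neighborFinset u).card := by
    have e1 : ∀ x : V, Γ.neighborFinset x ∩ M = M.filter (fun w => Γ.Adj x w) := by
      intro x
      ext w
      simp only [mem_inter, mem_filter, SimpleGraph.mem_neighborFinset]
      tauto
    have e2 : ∀ w : V, Γ.neighborFinset w ∩ Γ.neighborFinset u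
        = (Γ.neighborFinset u).filter (fun x => Γ.Adj x w) := by
      intro w
      ext x
      simp only [mem_inter, mem_filter, SimpleGraph.mem_neighborFinset]
      rw [Γ.adj_comm w x]
      tauto
    calc ∑ x ∈ Γ.neighborFinset u, (Γ.neighborFinset x ∩ M).card
        = ∑ x ∈ Γ.neighborFinset u, ∑ w ∈ M, if Γ.Adj x w then 1 else 0 := by
          refine Finset.sum_congr rfl (fun x _ => ?_)
          rw [e1 x, Finset.card_filter]
      _ = ∑ w ∈ M, ∑ x ∈ Γ.neighborFinset u, if Γ.Adj x w then 1 else 0 := Finset.sum_comm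
      _ = ∑ w ∈ M, (Γ.neighborFinset w ∩ Γ.neighborFinset u).card := by
          refine Finset.sum_congr rfl (fun w _ => ?_)
          rw [e2 w, Finset.card_filter]
  have hB : k * (1 + ℓ) + M.card * μ = k * k := by
    have h1 : ∑ x ∈ Γ.neighborFinset u, ((1 + ℓ) + (Γ.neighborFinset x ∩ M).card)
        = ∑ x ∈ Γ.neighborFinset u, k := Finset.sum_congr rfl (fun x hx => hNusplit x hx)
    rw [Finset.sum_add_distrib, Finset.sum_const, Finset.sum_const, hdeg u, hdouble] at h1
    have h2 : ∑ w ∈ M, (Γ.neighborFinset w ∩ Γ.neighborFinset u).card = ∑ w ∈ M, μ :=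
      Finset.sum_congr rfl (fun w hw => hwμ w hw)
    rw [h2, Finset.sum_const] at h1
    simp only [smul_eq_mul] at h1
    omega
  -- ℓ + 1 ≤ k
  have hC : 1 + ℓ ≤ k := by
    obtain ⟨x, hx⟩ := card_pos.mp (show 0 < (Γ.neighborFinset u).card by rw [hdeg u]; omega)
    have := hNusplit x hx
    omega
  -- v's neighbors inside M
  have hvsplit := hMsplit v hvM
  have hvE : (Γ.neighborFinset v ∩ M).card + 1 ≤ M.card := by
    have hsub : Γ.neighborFinset v ∩ M ⊆ M.erase v := by
      intro x hx
      obtain ⟨hx1, hx2⟩ := mem_inter.1 hx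
      refine mem_erase.2 ⟨?_, hx2⟩
      intro hxv
      have : Γ.Adj v x := by simpa using hx1
      rw [hxv] at this
      exact Γ.loopless.irrefl v this
    have := card_le_card hsub
    rw [card_erase_of_mem hvM] at this
    omega
  -- a neighbor of v inside M, giving 2μ ≤ ℓ + k
  have hF : μ + μ ≤ ℓ + k := by
    obtain ⟨w', hw'⟩ := card_pos.mp (show 0 < (Γ.neighborFinset v ∩ M).card by omega)
    obtain ⟨hw'1, hw'M⟩ := mem_inter.1 hw'
    have hvw' : Γ.Adj v w' := by simpa using hw'1
    have hA1 : (Γ.neighborFinset v ∩ Γ.neighborFinset u).card = μ :=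
      hcomμ v u (Ne.symm hne) (fun ha => hnadj ha.symm)
    have hA2 : (Γ.neighborFinset w' ∩ Γ.neighborFinset u).card = μ := hwμ w' hw'M
    have hun := Finset.card_inter_add_card_union
      (Γ.neighborFinset v ∩ Γ.neighborFinset u) (Γ.neighborFinset w' ∩ Γ.neighborFinset u)
    have hsub1 : (Γ.neighborFinset v ∩ Γ.neighborFinset u)
        ∪ (Γ.neighborFinset w' ∩ Γ.neighborFinset u) ⊆ Γ.neighborFinset u :=
      union_subset inter_subset_right inter_subset_right
    have hsub2 : (Γ.neighborFinset v ∩ Γ.neighborFinset u)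
        ∩ (Γ.neighborFinset w' ∩ Γ.neighborFinset u)
        ⊆ Γ.neighborFinset v ∩ Γ.neighborFinset w' := by
      intro x hx
      simp only [mem_inter] at hx ⊢
      tauto
    have hc1 := card_le_card hsub1
    have hc2 := card_le_card hsub2
    rw [hdeg u] at hc1
    rw [hcomℓ v w' hvw'] at hc2
    omega
  -- the rank bound : r + (k - μ) + 1 ≤ n
  set t : ℕ := k - μ with htdef
  have ht : μ + t = k := by omega
  have ht1 : 1 ≤ t := by omega
  have hG : r + t + 1 ≤ n := by
    set T : Finset V := insert u (insert v (Γ.neighborFinset u ∪ Γ.neighborFinset v)) with hTdef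
    have hvnot : v ∉ Γ.neighborFinset u ∪ Γ.neighborFinset v := by
      simp only [mem_union, SimpleGraph.mem_neighborFinset]
      rintro (hx | hx)
      · exact hnadj hx
      · exact Γ.loopless.irrefl v hx
    have hunot : u ∉ insert v (Γ.neighborFinset u ∪ Γ.neighborFinset v) := by
      simp only [mem_insert, mem_union, SimpleGraph.mem_neighborFinset]
      rintro (rfl | hx | hx)
      · exact hne rfl
      · exact Γ.loopless.irrefl u hx
      · exact hnadj hx.symm
    have hTcard : T.card = 1 + (1 + (Γ.neighborFinset u ∪ Γ.neighborFinset v).card) := by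
      rw [hTdef, card_insert_of_notMem hunot, card_insert_of_notMem hvnot]
      omega
    have hUV : (Γ.neighborFinset u ∪ Γ.neighborFinset v).card + μ = k + k := by
      have h1 := Finset.card_inter_add_card_union (Γ.neighborFinset u) (Γ.neighborFinset v)
      rw [hcomμ u v hne hnadj, hdeg u, hdeg v] at h1
      omega
    have himgT : (T.image (f : V → V)).card ≤ 1 + k := by
      have hsub : T.image (f : V → V) ⊆ insert (f u) (Γ.neighborFinset (f u)) := by
        intro y hy
        obtain ⟨x, hxT, rfl⟩ := mem_image.1 hy
        rw [hTdef] at hxT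
        rcases mem_insert.1 hxT with rfl | hxT
        · exact mem_insert_self _ _
        rcases mem_insert.1 hxT with rfl | hxT
        · rw [← hfuv]; exact mem_insert_self _ _
        rcases mem_union.1 hxT with hx | hx
        · refine mem_insert_of_mem ?_
          rw [SimpleGraph.mem_neighborFinset]
          exact f.map_adj (by simpa using hx)
        · refine mem_insert_of_mem ?_
          rw [SimpleGraph.mem_neighborFinset, hfuv]
          exact f.map_adj (by simpa using hx)
      calc (T.image (f : V → V)).card ≤ (insert (f u) (Γ.neighborFinset (f u))).card :=
            card_le_card hsub
        _ ≤ (Γ.neighborFinset (f u)).card + 1 := card_insert_le _ _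
        _ = 1 + k := by rw [hdeg (f u)]; omega
    have hsdT : (univ \ T).card + T.card = n := by
      have h1 := card_sdiff_add_card_eq_card (subset_univ T)
      rwa [card_univ, h.card] at h1
    have hrle : r ≤ (1 + k) + (univ \ T).card := by
      have hcover : (univ : Finset V) = T ∪ (univ \ T) :=
        (union_sdiff_of_subset (subset_univ T)).symm
      calc r = ((univ : Finset V).image (f : V → V)).card := hr.symm
        _ = ((T ∪ (univ \ T)).image (f : V → V)).card := by rw [← hcover]
        _ = ((T.image (f : V → V)) ∪ ((univ \ T).image (f : V → V))).card := by
              rw [image_union]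
        _ ≤ (T.image (f : V → V)).card + ((univ \ T).image (f : V → V)).card :=
              card_union_le _ _
        _ ≤ (1 + k) + (univ \ T).card :=
              Nat.add_le_add himgT (card_image_le)
    omega
  -- the main inequality : n - 1 ≤ 36 t²
  have key : (n : ℤ) - 1 ≤ 36 * (t : ℤ) * (t : ℤ) := by
    have hBz : (k : ℤ) * (1 + ℓ) + (M.card : ℤ) * μ = (k : ℤ) * k := by exact_mod_cast hB
    have htz : (μ : ℤ) + t = k := by exact_mod_cast ht
    have htz1 : (1 : ℤ) ≤ t := by exact_mod_cast ht1
    have hE2 : (t : ℤ) + 1 ≤ M.card := by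
      have h5 : t + 1 ≤ M.card := by omega
      exact_mod_cast h5
    have hFz : (μ : ℤ) + μ ≤ ℓ + k := by exact_mod_cast hF
    have hCz : (1 : ℤ) + ℓ ≤ k := by exact_mod_cast hC
    have hnz : (n : ℤ) = 1 + k + M.card := by exact_mod_cast hnkm
    have hμz : (1 : ℤ) ≤ μ := by exact_mod_cast hμ
    have hmz : (1 : ℤ) ≤ M.card := by exact_mod_cast hm1
    have hkz : (1 : ℤ) ≤ k := by
      have h5 : 1 ≤ k := by omega
      exact_mod_cast h5
    have hℓz : (0 : ℤ) ≤ ℓ := Int.ofNat_nonneg ℓ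
    have hL4 : (k : ℤ) * ((M.card : ℤ) + ℓ + 1 - k) = (M.card : ℤ) * t := by
      linear_combination hBz - (M.card : ℤ) * htz
    have hmt : (1 : ℤ) ≤ (M.card : ℤ) * t := by
      have h9 := mul_le_mul hmz htz1 (by norm_num) (by linarith)
      linarith [h9]
    have hpos : (1 : ℤ) ≤ (M.card : ℤ) + ℓ + 1 - k := by
      by_contra hcon
      push_neg at hcon
      have h5 : (k : ℤ) * ((M.card : ℤ) + ℓ + 1 - k) ≤ 0 :=
        mul_nonpos_of_nonneg_of_nonpos (by linarith) (by linarith)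
      linarith [hL4 ▸ h5]
    by_cases hcase : (M.card : ℤ) ≤ 3 * ((k : ℤ) - 1 - ℓ)
    · -- m small relative to t
      have h1 : (M.card : ℤ) ≤ 6 * t - 3 := by linarith
      have h2 : (k : ℤ) ≤ (M.card : ℤ) * t := by
        have h9 := mul_le_mul_of_nonneg_left hpos (show (0:ℤ) ≤ k by linarith)
        linarith [h9, hL4]
      have h3 : (n : ℤ) - 1 ≤ (M.card : ℤ) * M.card := by
        have h9 : (t : ℤ) ≤ (M.card : ℤ) - 1 := by linarith
        have h10 := mul_le_mul_of_nonneg_left h9 (show (0:ℤ) ≤ (M.card : ℤ) by linarith)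
        have e : (M.card : ℤ) * ((M.card : ℤ) - 1) = (M.card : ℤ) * M.card - M.card := by ring
        linarith [h2, h10, hnz, e]
      have h7 : (M.card : ℤ) * M.card ≤ (6 * t - 3) * (6 * t - 3) :=
        mul_le_mul h1 h1 (by linarith) (by linarith)
      have e3 : (6 * (t : ℤ) - 3) * (6 * (t : ℤ) - 3) = 36 * (t : ℤ) * t - 36 * t + 9 := by ring
      linarith [h3, h7, e3, htz1]
    · -- k small relative to t
      push_neg at hcase
      have hc3 : 2 * (M.card : ℤ) + 1 ≤ 3 * ((M.card : ℤ) + ℓ + 1 - k) := by linarith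
      have h4 : (k : ℤ) * (2 * M.card + 1) ≤ 3 * ((M.card : ℤ) * t) := by
        calc (k : ℤ) * (2 * M.card + 1)
            ≤ (k : ℤ) * (3 * ((M.card : ℤ) + ℓ + 1 - k)) :=
              mul_le_mul_of_nonneg_left hc3 (by linarith)
          _ = 3 * ((k : ℤ) * ((M.card : ℤ) + ℓ + 1 - k)) := by ring
          _ = 3 * ((M.card : ℤ) * t) := by rw [hL4]
      have h8 : (1 : ℤ) ≤ (M.card : ℤ) * (3 * t - 2 * k) := by
        have e : (M.card : ℤ) * (3 * t - 2 * k)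
            = 3 * ((M.card : ℤ) * t) - (k : ℤ) * (2 * M.card + 1) + k := by ring
        rw [e]
        linarith [h4, hkz]
      have h1 : 2 * (k : ℤ) ≤ 3 * t := by
        by_contra hcon
        push_neg at hcon
        have h9 : (3 * (t : ℤ) - 2 * k) ≤ -1 := by linarith
        have h10 := mul_le_mul_of_nonneg_left h9 (show (0:ℤ) ≤ (M.card : ℤ) by linarith)
        have e : (M.card : ℤ) * (-1 : ℤ) = -(M.card : ℤ) := by ring
        rw [e] at h10
        linarith [h8, h10, hmz]
      have h5a : (M.card : ℤ) ≤ (M.card : ℤ) * μ := by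
        have h9 := mul_le_mul_of_nonneg_left hμz (show (0:ℤ) ≤ (M.card : ℤ) by linarith)
        linarith [h9]
      have hkl : (0 : ℤ) ≤ (k : ℤ) * ℓ := mul_nonneg (by linarith) hℓz
      have e2 : (k : ℤ) * ((k : ℤ) - 1 - ℓ) = (k : ℤ) * k - (k : ℤ) * (1 + ℓ) := by ring
      have e4 : (k : ℤ) * (1 + ℓ) = k + (k : ℤ) * ℓ := by ring
      have h6 : (n : ℤ) - 1 ≤ (k : ℤ) * k := by
        linarith [h5a, hBz, hnz, e2, e4, hkl]
      have h7 : (2 * (k : ℤ)) * (2 * k) ≤ (3 * (t : ℤ)) * (3 * t) :=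
        mul_le_mul h1 h1 (by linarith) (by linarith)
      have e5 : (2 * (k : ℤ)) * (2 * k) = 4 * ((k : ℤ) * k) := by ring
      have e6 : (3 * (t : ℤ)) * (3 * t) = 9 * ((t : ℤ) * t) := by ring
      have h11 : (0 : ℤ) ≤ (t : ℤ) * t := mul_self_nonneg _
      linarith [h6, h7, e5, e6, h11]
  -- finish over the reals
  have ht0 : (0 : ℝ) ≤ (t : ℝ) := Nat.cast_nonneg t
  have hsqle : ((n : ℝ) - 1) ≤ (6 * (t : ℝ)) ^ 2 := by
    have h5 : ((n : ℝ) - 1) ≤ 36 * (t : ℝ) * (t : ℝ) := by exact_mod_cast key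
    have e : (6 * (t : ℝ)) ^ 2 = 36 * (t : ℝ) * (t : ℝ) := by ring
    linarith [h5, e]
  have hsq : Real.sqrt ((n : ℝ) - 1) ≤ 6 * (t : ℝ) := by
    calc Real.sqrt ((n : ℝ) - 1) ≤ Real.sqrt ((6 * (t : ℝ)) ^ 2) := Real.sqrt_le_sqrt hsqle
      _ = 6 * (t : ℝ) := Real.sqrt_sq (by positivity)
  have hGr : (r : ℝ) + (t : ℝ) + 1 ≤ (n : ℝ) := by exact_mod_cast hG
  linarith [hsq, hGr, ht0]
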